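/- Let Q1, Q2 be the integer quadratic forms Q1 = u*v + u*w - 4*v*w + 2*v*z + 2*w*z + x^2 - 2*x*z + y^2 - z^2 and Q2 = u*v - u*w + u*y - 2*v^2 + 2*v*x - 2*w*y + 2*w*z + 2*x*z. Over ℚ, the scheme X = {Q1 = 0} ∩ {Q2 = 0} ⊂ ℙ^5_ℚ is smooth of dimension 3, i.e., at every point of X(ℚ̄) the Jacobian matrix of (Q1, Q2) has rank 2. -/
import Mathlib

open MvPolynomial

/-- `Q1` in the variables `(u,v,w,x,y,z) = (X 0, …, X 5)` over `ℚ`. -/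
noncomputable def Q1Q : MvPolynomial (Fin 6) ℚ :=
  X 0 * X 1 + X 0 * X 2 - 4 * X 1 * X 2 + 2 * X 1 * X 5 + 2 * X 2 * X 5 + X 3 ^ 2 -
    2 * X 3 * X 5 + X 4 ^ 2 - X 5 ^ 2

/-- `Q2` in the variables `(u,v,w,x,y,z) = (X 0, …, X 5)` over `ℚ`. -/
noncomputable def Q2Q : MvPolynomial (Fin 6) ℚ :=
  X 0 * X 1 - X 0 * X 2 + X 0 * X 4 - 2 * X 1 ^ 2 + 2 * X 1 * X 3 - 2 * X 2 * X 4 +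
    2 * X 2 * X 5 + 2 * X 3 * X 5

private lemma pd2 (i : Fin 6) : (pderiv i) (2 : MvPolynomial (Fin 6) ℚ) = 0 := by
  rw [show (2 : MvPolynomial (Fin 6) ℚ) = C 2 from (map_ofNat C _).symm, pderiv_C]
private lemma pd4 (i : Fin 6) : (pderiv i) (4 : MvPolynomial (Fin 6) ℚ) = 0 := by
  rw [show (4 : MvPolynomial (Fin 6) ℚ) = C 4 from (map_ofNat C _).symm, pderiv_C]

set_option maxHeartbeats 2000000 in
/-- `X = {Q1 = 0} ∩ {Q2 = 0} ⊂ ℙ^5_ℚ` is smooth of dimension 3: at every point of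
`X(ℚ̄)` the 2×6 Jacobian matrix of `(Q1, Q2)` has rank 2, i.e. its two rows (the
gradients) are linearly independent. -/
theorem stmt_16 :
    ∀ v : Fin 6 → AlgebraicClosure ℚ, v ≠ 0 →
      aeval v Q1Q = 0 → aeval v Q2Q = 0 →
      LinearIndependent (AlgebraicClosure ℚ)
        ![fun j : Fin 6 => aeval v (pderiv j Q1Q),
          fun j : Fin 6 => aeval v (pderiv j Q2Q)] := by
  intro v hv h1 h2
  have h1' : v 0 * v 1 + v 0 * v 2 - 4 * v 1 * v 2 + 2 * v 1 * v 5 + 2 * v 2 * v 5 + v 3 ^ 2 -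
      2 * v 3 * v 5 + v 4 ^ 2 - v 5 ^ 2 = 0 := by rw [← h1]; simp [Q1Q]; try ring
  have h2' : v 0 * v 1 - v 0 * v 2 + v 0 * v 4 - 2 * v 1 ^ 2 + 2 * v 1 * v 3 - 2 * v 2 * v 4 +
      2 * v 2 * v 5 + 2 * v 3 * v 5 = 0 := by rw [← h2]; simp [Q2Q]; try ring
  have d10 : aeval v (pderiv 0 Q1Q) = (v 1 + v 2) := by
    simp [Q1Q, pderiv_X, pd2, pd4]; try ring
  have d11 : aeval v (pderiv 1 Q1Q) = (v 0 - 4 * v 2 + 2 * v 5) := by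
    simp [Q1Q, pderiv_X, pd2, pd4]; try ring
  have d12 : aeval v (pderiv 2 Q1Q) = (v 0 - 4 * v 1 + 2 * v 5) := by
    simp [Q1Q, pderiv_X, pd2, pd4]; try ring
  have d13 : aeval v (pderiv 3 Q1Q) = (2 * v 3 - 2 * v 5) := by
    simp [Q1Q, pderiv_X, pd2, pd4]; try ring
  have d14 : aeval v (pderiv 4 Q1Q) = (2 * v 4) := by
    simp [Q1Q, pderiv_X, pd2, pd4]; try ring
  have d15 : aeval v (pderiv 5 Q1Q) = (2 * v 1 + 2 * v 2 - 2 * v 3 - 2 * v 5) := by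
    simp [Q1Q, pderiv_X, pd2, pd4]; try ring
  have d20 : aeval v (pderiv 0 Q2Q) = (v 1 - v 2 + v 4) := by
    simp [Q2Q, pderiv_X, pd2, pd4]; try ring
  have d21 : aeval v (pderiv 1 Q2Q) = (v 0 - 4 * v 1 + 2 * v 3) := by
    simp [Q2Q, pderiv_X, pd2, pd4]; try ring
  have d22 : aeval v (pderiv 2 Q2Q) = (-v 0 - 2 * v 4 + 2 * v 5) := by
    simp [Q2Q, pderiv_X, pd2, pd4]; try ring
  have d23 : aeval v (pderiv 3 Q2Q) = (2 * v 1 + 2 * v 5) := by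
    simp [Q2Q, pderiv_X, pd2, pd4]; try ring
  have d24 : aeval v (pderiv 4 Q2Q) = (v 0 - 2 * v 2) := by
    simp [Q2Q, pderiv_X, pd2, pd4]; try ring
  have d25 : aeval v (pderiv 5 Q2Q) = (2 * v 2 + 2 * v 3) := by
    simp [Q2Q, pderiv_X, pd2, pd4]; try ring
  have key : (v 1 + v 2) * (v 0 - 4 * v 1 + 2 * v 3) - (v 0 - 4 * v 2 + 2 * v 5) * (v 1 - v 2 + v 4) = 0 → (v 1 + v 2) * (-v 0 - 2 * v 4 + 2 * v 5) - (v 0 - 4 * v 1 + 2 * v 5) * (v 1 - v 2 + v 4) = 0 → (v 1 + v 2) * (2 * v 1 + 2 * v 5) - (2 * v 3 - 2 * v 5) * (v 1 - v 2 + v 4) = 0 → (v 1 + v 2) * (v 0 - 2 * v 2) - (2 * v 4) * (v 1 - v 2 + v 4) = 0 → (v 1 + v 2) * (2 * v 2 + 2 * v 3) - (2 * v 1 + 2 * v 2 - 2 * v 3 - 2 * v 5) * (v 1 - v 2 + v 4) = 0 → (v 0 - 4 * v 2 + 2 * v 5) * (-v 0 - 2 * v 4 + 2 * v 5) - (v 0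 - 4 * v 1 + 2 * v 5) * (v 0 - 4 * v 1 + 2 * v 3) = 0 → (v 0 - 4 * v 2 + 2 * v 5) * (2 * v 1 + 2 * v 5) - (2 * v 3 - 2 * v 5) * (v 0 - 4 * v 1 + 2 * v 3) = 0 → (v 0 - 4 * v 2 + 2 * v 5) * (v 0 - 2 * v 2) - (2 * v 4) * (v 0 - 4 * v 1 + 2 * v 3) = 0 → (v 0 - 4 * v 2 + 2 * v 5) * (2 * v 2 + 2 * v 3) - (2 * v 1 + 2 * v 2 - 2 * v 3 - 2 * v 5) * (v 0 - 4 * v 1 + 2 * v 3) = 0 → (v 0 - 4 * v 1 + 2 * v 5) * (2 * v 1 + 2 * v 5) - (2 * v 3 - 2 * v 5) * (-v 0 - 2 * v 4 + 2 * v 5) = 0 → (v 0 - 4 * v 1 + 2 * v 5) * (v 0 - 2 * v 2) - (2 * v 4) * (-v 0 - 2 * v 4 + 2 * v 5) = 0 → (v 0 - 4 * v 1 + 2 * v 5) * (2 * v 2 + 2 * v 3) - (2 * v 1 + 2 * v 2 - 2 * v 3 - 2 * v 5) * (-v 0 - 2 * v 4 + 2 * v 5) = 0 → (2 * v 3 -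 2 * v 5) * (v 0 - 2 * v 2) - (2 * v 4) * (2 * v 1 + 2 * v 5) = 0 → (2 * v 3 - 2 * v 5) * (2 * v 2 + 2 * v 3) - (2 * v 1 + 2 * v 2 - 2 * v 3 - 2 * v 5) * (2 * v 1 + 2 * v 5) = 0 → (2 * v 4) * (2 * v 2 + 2 * v 3) - (2 * v 1 + 2 * v 2 - 2 * v 3 - 2 * v 5) * (v 0 - 2 * v 2) = 0 → False := by
    intro m01 m02 m03 m04 m05 m12 m13 m14 m15 m23 m24 m25 m34 m35 m45
    apply hv
    funext k
    have z0 : v 0 = 0 := by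
      have hp : v 0 ^ 3 = 0 := by linear_combination ((7895551112/3444109631) * v 5 + (-19820850218/3444109631) * v 4 + (-16682736848/3444109631) * v 3 + (24698142206/3444109631) * v 2 + (12649896522/3444109631) * v 1 + (-8885909778/3444109631) * v 0) * h1' + ((742108826/149743897) * v 5 + (8034139228/3444109631) * v 4 + (-13161062900/3444109631) * v 3 + (6319413188/3444109631) * v 2 + (25345166992/3444109631) * v 1 + (4349622401/3444109631) * v 0) * h2' + ((2337812159/3444109631) * v 5 + (-382355043/299487794) * v 4 + (3000014696/3444109631) * v 3 + (-3009668310/3444109631) * v 2 + (-14475485317/3444109631) * v 1 + (12368030031/6888219262) * v 0) * m01 + ((-3427232371/6888219262) * v 5 + (-7349194478/3444109631) * v 4 + (23713663407/6888219262) * v 3 + (-11771823865/3444109631) * v 2 + (-12457079579/3444109631) * v 1 + (612082903/6888219262) * v 0) * m02 + ((-5388106009/3444109631) * v 5 + (1567631683/3444109631) * v 4 + (-17702061303/3444109631) * v 3 + (4773349485/3444109631) * v 2 + (15132456183/3444109631) * v 1 + (-24568679523/6888219262) * v 0) * m03 + ((16882201937/3444109631) * v 5 + (-9910425109/3444109631)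 * v 4 + (-8816112131/3444109631) * v 3 + (-13647790450/3444109631) * v 2 + (-665888314/3444109631) * v 1 + (13170247316/3444109631) * v 0) * m04 + ((-7366291254/3444109631) * v 4 + (3025162846/3444109631) * v 3 + (-9833563535/3444109631) * v 2 + (-6175899333/3444109631) * v 1 + (19348559921/6888219262) * v 0) * m05 + ((2581866147/3444109631) * v 5 + (-13973616959/13776438524) * v 4 + (-1004468843/3444109631) * v 3 + (-4180956309/13776438524) * v 0) * m12 + ((-607978369/3444109631) * v 5 + (8252417647/6888219262) * v 4 + (-4562846796/3444109631) * v 3 + (-369659691/6888219262) * v 0) * m13 + ((3630011683/6888219262) * v 5 + (-4229589615/3444109631) * v 4 + (-6099369971/6888219262) * v 3 + (2707262953/6888219262) * v 0) * m14 + ((-4331875682/3444109631) * v 4 + (-392162584/3444109631) * v 3 + (-709695273/6888219262) * v 0) * m15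
      exact pow_eq_zero_iff (by norm_num : (3:ℕ) ≠ 0) |>.mp hp
    have z1 : v 1 = 0 := by
      have hp : v 1 ^ 3 = 0 := by linear_combination ((-6059343715/13776438524) * v 5 + (12387076089/13776438524) * v 4 + (19891627077/13776438524) * v 3 + (-647194849/6888219262) * v 2 + (-14959809037/6888219262) * v 1 + (6317166093/13776438524) * v 0) * h1' + ((-510914139/299487794) * v 5 + (2685952037/6888219262) * v 4 + (970907999/6888219262) * v 3 + (15720780039/6888219262) * v 2 + (-3747902058/3444109631) * v 1 + (-5689546393/6888219262) * v 0) * h2' + ((-17247285/27552877048) * v 5 + (-2504149269/2395902352) * v 4 + (14252815201/55105754096) * v 3 + (-21334038219/55105754096) * v 2 + (52601096849/55105754096) * v 1 + (-121579330323/110211508192) * v 0) * m01 + ((16017913357/27552877048) * v 5 + (-30706275633/55105754096) * v 4 + (-31676051483/27552877048) * v 3 + (-14298483763/55105754096) * v 2 + (77342159009/55105754096) * v 1 + (187928591/6888219262) * v 0) * m02 + ((5414051441/13776438524) * v 5 + (11776900467/55105754096) * v 4 + (25499114361/27552877048) * v 3 + (23379036731/55105754096) * v 2 + (-70281478017/55105754096)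 * v 1 + (16578546631/55105754096) * v 0) * m03 + ((4030502437/6888219262) * v 5 + (12387076089/27552877048) * v 4 + (-3852343795/13776438524) * v 3 + (2526078497/13776438524) * v 2 + (-2876803919/3444109631) * v 1 + (35503835609/55105754096) * v 0) * m04 + ((-17540656479/55105754096) * v 4 + (7389346673/27552877048) * v 3 + (-16281881225/55105754096) * v 2 + (11614202183/55105754096) * v 1 + (-411888259/27552877048) * v 0) * m05 + ((-948619321/3444109631) * v 5 + (19087622941/55105754096) * v 4 + (290456093/110211508192) * v 3 + (-7645229599/220423016384) * v 0) * m12 + ((9118565421/55105754096) * v 5 + (-8352946399/27552877048) * v 4 + (60670675663/110211508192) * v 3 + (-6533922663/220423016384) * v 0) * m13 + ((-13691131661/55105754096) * v 5 + (6468768097/27552877048) * v 4 + (5817178259/55105754096) * v 3 + (-7645229599/110211508192) * v 0) * m14 + ((-1291505735/13776438524) * v 4 + (20887421509/110211508192) * v 3 + (-12616298297/220423016384) * v 0) * m15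
      exact pow_eq_zero_iff (by norm_num : (3:ℕ) ≠ 0) |>.mp hp
    have z2 : v 2 = 0 := by
      have hp : v 2 ^ 3 = 0 := by linear_combination ((1826576083/3444109631) * v 5 + (-17845381901/13776438524) * v 4 + (-27745903517/13776438524) * v 3 + (6821213269/13776438524) * v 2 + (42732304135/13776438524) * v 1 + (-19241648009/27552877048) * v 0) * h1' + ((642820831/299487794) * v 5 + (-2456241856/3444109631) * v 4 + (-2685733029/6888219262) * v 3 + (-9255729536/3444109631) * v 2 + (9749419625/6888219262) * v 1 + (3174530418/3444109631) * v 0) * h2' + ((1243921670/3444109631) * v 5 + (2806658071/2395902352) * v 4 + (-3048904525/6888219262) * v 3 + (12169307821/27552877048) * v 2 + (-6018301204/3444109631) * v 1 + (78897149793/55105754096) * v 0) * m01 + ((-45837098637/55105754096) * v 5 + (9194698565/13776438524) * v 4 + (85661097659/55105754096) * v 3 + (17354238991/27552877048) * v 2 + (-27027900131/13776438524) * v 1 + (-9442944157/55105754096) * v 0) * m02 + ((-3720116759/13776438524) * v 5 + (-6471536391/13776438524) * v 4 + (-3898534095/3444109631) * v 3 + (-18066867849/27552877048) * v 2 + (43289608039/27552877048)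 * v 1 + (-24935640607/55105754096) * v 0) * m03 + ((-6190442727/13776438524) * v 5 + (-17845381901/27552877048) * v 4 + (10114899853/13776438524) * v 3 + (-1809964121/3444109631) * v 2 + (13738150241/13776438524) * v 1 + (-5969003227/6888219262) * v 0) * m04 + ((9287239099/13776438524) * v 4 + (-1091282491/6888219262) * v 3 + (11817670599/27552877048) * v 2 + (-7526851721/27552877048) * v 1 + (4853235689/55105754096) * v 0) * m05 + ((20085946733/55105754096) * v 5 + (-50694739489/110211508192) * v 4 + (526240543/55105754096) * v 3 + (2595811383/55105754096) * v 0) * m12 + ((-12779642401/55105754096) * v 5 + (2757624017/6888219262) * v 4 + (-19966731357/27552877048) * v 3 + (2389691427/55105754096) * v 0) * m13 + ((8216288953/27552877048) * v 5 + (-16458152243/55105754096) * v 4 + (-3477183733/27552877048) * v 3 + (2595811383/27552877048) * v 0) * m14 + ((6128863775/55105754096) * v 4 + (-12187559197/55105754096) * v 3 + (4494463543/55105754096) * v 0) * m15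
      exact pow_eq_zero_iff (by norm_num : (3:ℕ) ≠ 0) |>.mp hp
    have z3 : v 3 = 0 := by
      have hp : v 3 ^ 3 = 0 := by linear_combination ((-2249062689/6888219262) * v 5 + (9325997011/13776438524) * v 4 + (17798190953/13776438524) * v 3 + (-1240400199/13776438524) * v 2 + (-12206649139/13776438524) * v 1 + (4614919549/27552877048) * v 0) * h1' + ((-177182463/299487794) * v 5 + (334075512/3444109631) * v 4 + (6208397737/6888219262) * v 3 + (949745415/6888219262) * v 2 + (-7499580725/6888219262) * v 1 + (-1413370389/3444109631) * v 0) * h2' + ((-1333619861/13776438524) * v 5 + (-1073557627/2395902352) * v 4 + (2034195277/13776438524) * v 3 + (2770032035/27552877048) * v 2 + (7812785991/13776438524) * v 1 + (-24437700131/55105754096) * v 0) * m01 + ((9348360133/55105754096) * v 5 + (-6942564455/27552877048) * v 4 + (-48715807227/55105754096) * v 3 + (1394067681/3444109631) * v 2 + (26525004195/27552877048) * v 1 + (-5547959613/55105754096) * v 0) * m02 + ((7347005753/27552877048) * v 5 + (6930357247/27552877048) * v 4 + (15144669601/27552877048) * v 3 + (-77805991/13776438524) * v 2 + (-6959609637/6888219262)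 * v 1 + (24834462897/55105754096) * v 0) * m03 + ((3993306123/27552877048) * v 5 + (9325997011/27552877048) * v 4 + (-3588827895/27552877048) * v 3 + (8205905507/13776438524) * v 2 + (-3134306981/13776438524) * v 1 + (975673677/6888219262) * v 0) * m04 + ((-6706726559/27552877048) * v 4 + (-584583781/3444109631) * v 3 + (5487968771/13776438524) * v 2 + (11979374389/13776438524) * v 1 + (-28239730499/55105754096) * v 0) * m05 + ((-8356591663/55105754096) * v 5 + (22041352705/110211508192) * v 4 + (718757441/13776438524) * v 3 + (-2306561381/110211508192) * v 0) * m12 + ((3858466285/55105754096) * v 5 + (-15391336413/55105754096) * v 4 + (10012639081/55105754096) * v 3 + (-772777317/110211508192) * v 0) * m13 + ((-4189632993/27552877048) * v 5 + (3874967521/27552877048) * v 4 + (1454290435/6888219262) * v 3 + (-2306561381/55105754096) * v 0) * m14 + ((6738329905/55105754096) * v 4 + (1497721663/13776438524) * v 3 + (-4481801325/110211508192) * v 0) * m15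
      exact pow_eq_zero_iff (by norm_num : (3:ℕ) ≠ 0) |>.mp hp
    have z4 : v 4 = 0 := by
      have hp : v 4 ^ 3 = 0 := by linear_combination ((9625444247/6888219262) * v 5 + (-63423123711/13776438524) * v 4 + (-98907204299/13776438524) * v 3 + (21424372963/13776438524) * v 2 + (142873822887/13776438524) * v 1 + (-70072706397/27552877048) * v 0) * h1' + ((2073642049/299487794) * v 5 + (-17160194011/6888219262) * v 4 + (-8748797985/6888219262) * v 3 + (-31941328486/3444109631) * v 2 + (19919529963/3444109631) * v 1 + (21868386923/6888219262) * v 0) * h2' + ((11818144071/6888219262) * v 5 + (2512969865/598975588) * v 4 + (-37835472299/27552877048) * v 3 + (4730721674/3444109631) * v 2 + (-44989018045/6888219262) * v 1 + (276444516113/55105754096) * v 0) * m01 + ((-78796430185/27552877048) * v 5 + (56777872639/27552877048) * v 4 + (132799739711/27552877048) * v 3 + (15176168087/6888219262) * v 2 + (-87412453125/13776438524) * v 1 + (-35440695273/55105754096) * v 0) * m02 + ((-14021734895/27552877048) * v 5 + (-4350077466/3444109631) * v 4 + (-110431299827/27552877048) * v 3 + (-77571167499/27552877048) * v 2 + (135192326729/27552877048)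 * v 1 + (-65876156999/55105754096) * v 0) * m03 + ((-44979546293/27552877048) * v 5 + (-77199562235/27552877048) * v 4 + (46818888151/27552877048) * v 3 + (-22777320623/13776438524) * v 2 + (54027036049/13776438524) * v 1 + (-40831336085/13776438524) * v 0) * m04 + ((53053759781/27552877048) * v 4 + (-3963257871/6888219262) * v 3 + (15068452769/27552877048) * v 2 + (-13901581115/27552877048) * v 1 + (22833313613/55105754096) * v 0) * m05 + ((66312993489/55105754096) * v 5 + (-89890911589/55105754096) * v 4 + (3382606685/55105754096) * v 3 + (18617794927/110211508192) * v 0) * m12 + ((-47062104995/55105754096) * v 5 + (75278662361/55105754096) * v 4 + (-35297001005/13776438524) * v 3 + (1589536337/13776438524) * v 0) * m13 + ((59030411459/55105754096) * v 5 + (-57871712941/55105754096) * v 4 + (-20991099407/55105754096) * v 3 + (18617794927/55105754096) * v 0) * m14 + ((11566209161/27552877048) * v 4 + (-42280799721/55105754096) * v 3 + (923287475/3444109631) * v 0) * m15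
      exact pow_eq_zero_iff (by norm_num : (3:ℕ) ≠ 0) |>.mp hp
    have z5 : v 5 = 0 := by
      have hp : v 5 ^ 3 = 0 := by linear_combination ((59828020277/6888219262) * v 5 + (-86698384826/3444109631) * v 4 + (-554342249477/13776438524) * v 3 + (42975667271/6888219262) * v 2 + (208300513034/3444109631) * v 1 + (-381077893797/27552877048) * v 0) * h1' + ((23349349415/598975588) * v 5 + (-48321880240/3444109631) * v 4 + (-24795889199/3444109631) * v 3 + (-183856151005/3444109631) * v 2 + (208191350907/6888219262) * v 1 + (484571575613/27552877048) * v 0) * h2' + ((239514872905/27552877048) * v 5 + (55812615741/2395902352) * v 4 + (-210293498903/27552877048) * v 3 + (110915429985/13776438524) * v 2 + (-977339386437/27552877048) * v 1 + (96656637973/3444109631) * v 0) * m01 + ((-901883978969/55105754096) * v 5 + (358302966353/27552877048) * v 4 + (1512125509263/55105754096) * v 3 + (386444412395/27552877048) * v 2 + (-984072898689/27552877048) * v 1 + (-225526498757/55105754096) * v 0) * m02 + ((-42675487163/13776438524) * v 5 + (-215191098075/27552877048) * v 4 + (-574064894039/27552877048) * v 3 + (-205277109387/13776438524) * v 2 +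 (376590456417/13776438524) * v 1 + (-377367280821/55105754096) * v 0) * m03 + ((-36360029967/3444109631) * v 5 + (-43349192413/3444109631) * v 4 + (37617662740/3444109631) * v 3 + (-29453427342/3444109631) * v 2 + (145242982471/6888219262) * v 1 + (-60538888880/3444109631) * v 0) * m04 + ((322858278735/27552877048) * v 4 + (-84333489945/27552877048) * v 3 + (52008575301/13776438524) * v 2 + (-46525757649/13776438524) * v 1 + (115892624263/55105754096) * v 0) * m05 + ((379179757221/55105754096) * v 5 + (-963889172849/110211508192) * v 4 + (11485698091/27552877048) * v 3 + (98272813559/110211508192) * v 0) * m12 + ((-245747278143/55105754096) * v 5 + (48531832761/6888219262) * v 4 + (-787144602277/55105754096) * v 3 + (93126850715/110211508192) * v 0) * m13 + ((74549188859/13776438524) * v 5 + (-317234174587/55105754096) * v 4 + (-28482507849/13776438524) * v 3 + (98272813559/55105754096) * v 0) * m14 + ((65693382951/27552877048) * v 4 + (-14550147050/3444109631) * v 3 + (175636244017/110211508192) * v 0) * m15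
      exact pow_eq_zero_iff (by norm_num : (3:ℕ) ≠ 0) |>.mp hp
    fin_cases k <;> simp only [Pi.zero_apply] <;> assumption
  rw [LinearIndependent.pair_iff]
  intro s t hst
  have hs0 := congrFun hst 0
  simp only [Pi.add_apply, Pi.smul_apply, Pi.zero_apply, smul_eq_mul, d10, d20] at hs0
  have hs1 := congrFun hst 1
  simp only [Pi.add_apply, Pi.smul_apply, Pi.zero_apply, smul_eq_mul, d11, d21] at hs1
  have hs2 := congrFun hst 2
  simp only [Pi.add_apply, Pi.smul_apply, Pi.zero_apply, smul_eq_mul, d12, d22] at hs2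
  have hs3 := congrFun hst 3
  simp only [Pi.add_apply, Pi.smul_apply, Pi.zero_apply, smul_eq_mul, d13, d23] at hs3
  have hs4 := congrFun hst 4
  simp only [Pi.add_apply, Pi.smul_apply, Pi.zero_apply, smul_eq_mul, d14, d24] at hs4
  have hs5 := congrFun hst 5
  simp only [Pi.add_apply, Pi.smul_apply, Pi.zero_apply, smul_eq_mul, d15, d25] at hs5
  constructor
  · by_contra hs
    exact key
      (mul_left_cancel₀ hs (by linear_combination (v 0 - 4 * v 1 + 2 * v 3) * hs0 - (v 1 - v 2 + v 4) * hs1))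
      (mul_left_cancel₀ hs (by linear_combination (-v 0 - 2 * v 4 + 2 * v 5) * hs0 - (v 1 - v 2 + v 4) * hs2))
      (mul_left_cancel₀ hs (by linear_combination (2 * v 1 + 2 * v 5) * hs0 - (v 1 - v 2 + v 4) * hs3))
      (mul_left_cancel₀ hs (by linear_combination (v 0 - 2 * v 2) * hs0 - (v 1 - v 2 + v 4) * hs4))
      (mul_left_cancel₀ hs (by linear_combination (2 * v 2 + 2 * v 3) * hs0 - (v 1 - v 2 + v 4) * hs5))
      (mul_left_cancel₀ hs (by linear_combination (-v 0 - 2 * v 4 + 2 * v 5) * hs1 - (v 0 - 4 * v 1 + 2 * v 3) * hs2))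
      (mul_left_cancel₀ hs (by linear_combination (2 * v 1 + 2 * v 5) * hs1 - (v 0 - 4 * v 1 + 2 * v 3) * hs3))
      (mul_left_cancel₀ hs (by linear_combination (v 0 - 2 * v 2) * hs1 - (v 0 - 4 * v 1 + 2 * v 3) * hs4))
      (mul_left_cancel₀ hs (by linear_combination (2 * v 2 + 2 * v 3) * hs1 - (v 0 - 4 * v 1 + 2 * v 3) * hs5))
      (mul_left_cancel₀ hs (by linear_combination (2 * v 1 + 2 * v 5) * hs2 - (-v 0 - 2 * v 4 + 2 * v 5) * hs3))
      (mul_left_cancel₀ hs (by linear_combination (v 0 - 2 * v 2) * hs2 - (-v 0 - 2 * v 4 + 2 * v 5) * hs4))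
      (mul_left_cancel₀ hs (by linear_combination (2 * v 2 + 2 * v 3) * hs2 - (-v 0 - 2 * v 4 + 2 * v 5) * hs5))
      (mul_left_cancel₀ hs (by linear_combination (v 0 - 2 * v 2) * hs3 - (2 * v 1 + 2 * v 5) * hs4))
      (mul_left_cancel₀ hs (by linear_combination (2 * v 2 + 2 * v 3) * hs3 - (2 * v 1 + 2 * v 5) * hs5))
      (mul_left_cancel₀ hs (by linear_combination (2 * v 2 + 2 * v 3) * hs4 - (v 0 - 2 * v 2) * hs5))
  · by_contra ht
    exact key
      (mul_left_cancel₀ ht (by linear_combination (v 1 + v 2) * hs1 - (v 0 - 4 * v 2 + 2 * v 5) * hs0))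
      (mul_left_cancel₀ ht (by linear_combination (v 1 + v 2) * hs2 - (v 0 - 4 * v 1 + 2 * v 5) * hs0))
      (mul_left_cancel₀ ht (by linear_combination (v 1 + v 2) * hs3 - (2 * v 3 - 2 * v 5) * hs0))
      (mul_left_cancel₀ ht (by linear_combination (v 1 + v 2) * hs4 - (2 * v 4) * hs0))
      (mul_left_cancel₀ ht (by linear_combination (v 1 + v 2) * hs5 - (2 * v 1 + 2 * v 2 - 2 * v 3 - 2 * v 5) * hs0))
      (mul_left_cancel₀ ht (by linear_combination (v 0 - 4 * v 2 + 2 * v 5) * hs2 - (v 0 - 4 * v 1 + 2 * v 5) * hs1))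
      (mul_left_cancel₀ ht (by linear_combination (v 0 - 4 * v 2 + 2 * v 5) * hs3 - (2 * v 3 - 2 * v 5) * hs1))
      (mul_left_cancel₀ ht (by linear_combination (v 0 - 4 * v 2 + 2 * v 5) * hs4 - (2 * v 4) * hs1))
      (mul_left_cancel₀ ht (by linear_combination (v 0 - 4 * v 2 + 2 * v 5) * hs5 - (2 * v 1 + 2 * v 2 - 2 * v 3 - 2 * v 5) * hs1))
      (mul_left_cancel₀ ht (by linear_combination (v 0 - 4 * v 1 + 2 * v 5) * hs3 - (2 * v 3 - 2 * v 5) * hs2))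
      (mul_left_cancel₀ ht (by linear_combination (v 0 - 4 * v 1 + 2 * v 5) * hs4 - (2 * v 4) * hs2))
      (mul_left_cancel₀ ht (by linear_combination (v 0 - 4 * v 1 + 2 * v 5) * hs5 - (2 * v 1 + 2 * v 2 - 2 * v 3 - 2 * v 5) * hs2))
      (mul_left_cancel₀ ht (by linear_combination (2 * v 3 - 2 * v 5) * hs4 - (2 * v 4) * hs3))
      (mul_left_cancel₀ ht (by linear_combination (2 * v 3 - 2 * v 5) * hs5 - (2 * v 1 + 2 * v 2 - 2 * v 3 - 2 * v 5) * hs3))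
      (mul_left_cancel₀ ht (by linear_combination (2 * v 4) * hs5 - (2 * v 1 + 2 * v 2 - 2 * v 3 - 2 * v 5) * hs4))
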